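/- arXiv:1807.00384 — 2 statements merged into one kernel-verified Lean document; each statement's English description precedes it below -/
import Mathlib

section
/- Let G be a finite group, A a normal subgroup of G, and H a subgroup of A. Then H is pronormal in G if and only if H is pronormal in A and G = A·N_G(H). -/
open Pointwise

/-- `H` is pronormal in `G`: for every `g`, `H` and `H^g` are conjugate in `⟨H, H^g⟩`. -/
def Pronormal {G : Type*} [Group G] (H : Subgroup G) : Prop :=
  ∀ g : G, ∃ k ∈ (H ⊔ MulAut.conj g • H : Subgroup G),
    MulAut.conj k • H = MulAut.conj g • H

section Helpers

variable {G : Type*} [Group G]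

lemma mem_conj_smul_iff (g x : G) (H : Subgroup G) :
    x ∈ MulAut.conj g • H ↔ g⁻¹ * x * g ∈ H := by
  rw [Subgroup.mem_pointwise_smul_iff_inv_smul_mem, ← map_inv, MulAut.smul_def,
    MulAut.conj_apply, inv_inv]

lemma conj_smul_eq_iff_mem_normalizer (H : Subgroup G) (n : G) :
    MulAut.conj n • H = H ↔ n ∈ Subgroup.normalizer (H : Set G) := by
  constructor
  · intro h
    rw [Subgroup.mem_normalizer_iff]
    intro x
    constructor
    · intro hx
      have : n * x * n⁻¹ ∈ MulAut.conj n • H := by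
        rw [mem_conj_smul_iff]; group; simpa using hx
      rwa [h] at this
    · intro hx
      rw [← h, mem_conj_smul_iff] at hx
      convert hx using 2 <;> group
  · intro h
    ext x
    rw [mem_conj_smul_iff]
    rw [Subgroup.mem_normalizer_iff] at h
    rw [h (n⁻¹ * x * n)]
    constructor <;> intro hx <;> [skip; skip] <;> convert hx using 2 <;> group

lemma conj_smul_le_of_normal (A H : Subgroup G) [A.Normal] (hHA : H ≤ A) (g : G) :
    MulAut.conj g • H ≤ A := by
  intro x hx
  rw [mem_conj_smul_iff] at hx
  have := ‹A.Normal›.conj_mem _ (hHA hx) g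
  convert this using 1; group

lemma subgroupOf_sup_of_le {A S T : Subgroup G} (hS : S ≤ A) (hT : T ≤ A) :
    S.subgroupOf A ⊔ T.subgroupOf A = (S ⊔ T).subgroupOf A := by
  apply Subgroup.map_injective A.subtype_injective
  rw [Subgroup.map_sup, Subgroup.subgroupOf_map_subtype, Subgroup.subgroupOf_map_subtype,
    Subgroup.subgroupOf_map_subtype, inf_eq_left.2 hS, inf_eq_left.2 hT,
    inf_eq_left.2 (sup_le hS hT)]

lemma subgroupOf_inj_of_le {A S T : Subgroup G} (hS : S ≤ A) (hT : T ≤ A)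
    (h : S.subgroupOf A = T.subgroupOf A) : S = T := by
  have := congrArg (Subgroup.map A.subtype) h
  rwa [Subgroup.subgroupOf_map_subtype, Subgroup.subgroupOf_map_subtype,
    inf_eq_left.2 hS, inf_eq_left.2 hT] at this

lemma conj_smul_subgroupOf (A H : Subgroup G) (a : A) :
    MulAut.conj a • (H.subgroupOf A) = (MulAut.conj (a : G) • H).subgroupOf A := by
  ext x
  rw [mem_conj_smul_iff, Subgroup.mem_subgroupOf, Subgroup.mem_subgroupOf, mem_conj_smul_iff]
  rfl

end Helpers

theorem pronormal_iff_pronormal_in_normal_and_frattini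
    {G : Type*} [Group G] [Finite G] (A : Subgroup G) [A.Normal]
    (H : Subgroup G) (hHA : H ≤ A) :
    Pronormal H ↔ Pronormal (H.subgroupOf A) ∧ (A : Set G) * (Subgroup.normalizer (H : Set G) : Set G) = Set.univ := by
  constructor
  · intro hpro
    have hkA : ∀ g : G, (H ⊔ MulAut.conj g • H : Subgroup G) ≤ A := fun g =>
      sup_le hHA (conj_smul_le_of_normal A H hHA g)
    constructor
    · intro a
      obtain ⟨k, hk, hconj⟩ := hpro (a : G)
      have hkmem : k ∈ A := hkA a hk
      refine ⟨⟨k, hkmem⟩, ?_, ?_⟩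
      · rw [conj_smul_subgroupOf, subgroupOf_sup_of_le hHA (conj_smul_le_of_normal A H hHA a)]
        exact hk
      · rw [conj_smul_subgroupOf, conj_smul_subgroupOf, hconj]
    · apply Set.eq_univ_iff_forall.2
      intro g
      obtain ⟨k, hk, hconj⟩ := hpro g
      refine ⟨k, hkA g hk, k⁻¹ * g, ?_, by group⟩
      show k⁻¹ * g ∈ Subgroup.normalizer (H : Set G)
      rw [← conj_smul_eq_iff_mem_normalizer, map_mul, map_inv, mul_smul, ← hconj,
        inv_smul_smul]
  · rintro ⟨hpro, hfr⟩
    intro g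
    have hg : g ∈ (A : Set G) * (Subgroup.normalizer (H : Set G) : Set G) := hfr ▸ Set.mem_univ g
    obtain ⟨a, ha, n, hn, rfl⟩ := hg
    have ha' : a ∈ A := ha
    have hn' : n ∈ Subgroup.normalizer (H : Set G) := hn
    have hHn : MulAut.conj n • H = H := (conj_smul_eq_iff_mem_normalizer H n).2 hn'
    have hgH : MulAut.conj (a * n) • H = MulAut.conj a • H := by
      rw [map_mul, mul_smul, hHn]
    obtain ⟨k, hk, hconj⟩ := hpro ⟨a, ha'⟩
    rw [conj_smul_subgroupOf, subgroupOf_sup_of_le hHA (conj_smul_le_of_normal A H hHA a)]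
      at hk
    refine ⟨(k : G), ?_, ?_⟩
    · rw [hgH]; exact hk
    · rw [hgH]
      rw [conj_smul_subgroupOf, conj_smul_subgroupOf] at hconj
      exact subgroupOf_inj_of_le (conj_smul_le_of_normal A H hHA (k : G))
        (conj_smul_le_of_normal A H hHA a) hconj
end

section
/- Let G be a finite group, N a normal subgroup of G, and H a subgroup of G. Then H is pronormal in G if and only if HN/N is pronormal in G/N and H is pronormal in N_G(HN). -/
open Pointwise

private lemma map_conj_smul {G K : Type*} [Group G] [Group K] (f : G →* K) (g : G)
    (H : Subgroup G) :
    (MulAut.conj g • H).map f = MulAut.conj (f g) • H.map f := by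
  ext x
  simp only [Subgroup.mem_map, Subgroup.mem_smul_pointwise_iff_exists]
  constructor
  · rintro ⟨y, ⟨s, hs, rfl⟩, rfl⟩
    exact ⟨f s, ⟨s, hs, rfl⟩, by simp [MulAut.smul_def]⟩
  · rintro ⟨y, ⟨s, hs, rfl⟩, rfl⟩
    exact ⟨g * s * g⁻¹, ⟨s, hs, rfl⟩, by simp [MulAut.smul_def]⟩

private lemma conj_smul_self {G : Type*} [Group G] {K : Subgroup G} {k : G} (hk : k ∈ K) :
    MulAut.conj k • K = K := by
  refine le_antisymm ?_ ?_
  · rintro - ⟨s, hs, rfl⟩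
    exact K.mul_mem (K.mul_mem hk hs) (K.inv_mem hk)
  · intro x hx
    exact ⟨k⁻¹ * x * k, ⟨K.mul_mem (K.mul_mem (K.inv_mem hk) hx) hk,
      by simp [MulAut.conj_apply]; group⟩⟩

private lemma mem_normalizer_iff_conj_smul {G : Type*} [Group G] {K : Subgroup G} {g : G} :
    g ∈ Subgroup.normalizer (K : Set G) ↔ MulAut.conj g • K = K := by
  rw [Subgroup.mem_normalizer_iff]
  constructor
  · intro h
    refine le_antisymm ?_ ?_
    · rintro - ⟨s, hs, rfl⟩
      simpa [MulAut.smul_def] using (h s).1 hs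
    · intro x hx
      refine ⟨g⁻¹ * x * g, ?_, by simp [MulAut.conj_apply]; group⟩
      have := (h (g⁻¹ * x * g)).2
      apply this
      convert hx using 1
      group
  · intro h x
    constructor
    · intro hx
      rw [← h]
      exact ⟨x, hx, by simp [MulAut.smul_def]⟩
    · intro hx
      rw [← h] at hx
      rcases hx with ⟨s, hs, hsx⟩
      have hsx' : g * s * g⁻¹ = g * x * g⁻¹ := hsx
      have : s = x := mul_left_cancel (mul_right_cancel hsx')
      exact this ▸ hs

theorem pronormal_iff_map_quotient_and_pronormal_in_normalizer
    {G : Type*} [Group G] [Finite G] (N : Subgroup G) [N.Normal] (H : Subgroup G) :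
    Pronormal H ↔
      Pronormal (H.map (QuotientGroup.mk' N)) ∧
        Pronormal (H.subgroupOf (Subgroup.normalizer ((H ⊔ N : Subgroup G) : Set G))) := by
  set M := Subgroup.normalizer ((H ⊔ N : Subgroup G) : Set G) with hM
  have hHM : H ≤ M := le_trans le_sup_left Subgroup.le_normalizer
  have hmapH : (H.subgroupOf M).map M.subtype = H := by
    rw [Subgroup.subgroupOf_map_subtype, inf_eq_left.mpr hHM]
  have hinj : Function.Injective M.subtype := M.subtype_injective
  constructor
  · intro hp
    constructor
    · intro gq
      obtain ⟨g, rfl⟩ := QuotientGroup.mk'_surjective N gq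
      obtain ⟨k, hk, hconj⟩ := hp g
      refine ⟨QuotientGroup.mk' N k, ?_, ?_⟩
      · have := Subgroup.mem_map_of_mem (QuotientGroup.mk' N) hk
        rwa [Subgroup.map_sup, map_conj_smul] at this
      · rw [← map_conj_smul, ← map_conj_smul, hconj]
    · intro m
      obtain ⟨k, hk, hconj⟩ := hp (↑m : G)
      have hmsmul : MulAut.conj (↑m : G) • (H ⊔ N) = H ⊔ N :=
        mem_normalizer_iff_conj_smul.mp m.2
      have hsub : H ⊔ MulAut.conj (↑m : G) • H ≤ H ⊔ N := by
        refine sup_le le_sup_left ?_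
        rw [← hmsmul]
        exact Subgroup.pointwise_smul_le_pointwise_smul_iff.mpr le_sup_left
      have hkM : k ∈ M := Subgroup.le_normalizer (hsub hk)
      refine ⟨⟨k, hkM⟩, ?_, ?_⟩
      · refine (Subgroup.mem_map_iff_mem hinj (f := M.subtype)).mp ?_
        rw [Subgroup.map_sup, map_conj_smul, hmapH]
        exact hk
      · apply Subgroup.map_injective hinj (f := M.subtype)
        rw [map_conj_smul, map_conj_smul, hmapH]
        exact hconj
  · rintro ⟨hq, hn⟩ g
    obtain ⟨kq, hkq, hconjq⟩ := hq (QuotientGroup.mk' N g)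
    rw [← map_conj_smul, ← Subgroup.map_sup] at hkq
    rw [← map_conj_smul] at hconjq
    obtain ⟨k₀, hk₀, rfl⟩ := hkq
    rw [← map_conj_smul] at hconjq
    have hNsup : MulAut.conj k₀ • H ⊔ N = MulAut.conj g • H ⊔ N := by
      have h2 := congrArg (Subgroup.comap (QuotientGroup.mk' N)) hconjq
      rwa [Subgroup.comap_map_eq, Subgroup.comap_map_eq, QuotientGroup.ker_mk'] at h2
    have hg₁ : k₀⁻¹ * g ∈ M := by
      rw [hM, mem_normalizer_iff_conj_smul, map_mul, mul_smul,
        Subgroup.smul_sup (MulAut.conj g) H N, mem_normalizer_iff_conj_smul.mp (Subgroup.le_normalizer_of_normal (K := ⊤) (Subgroup.mem_top g) : g ∈ Subgroup.normalizer (N : Set G)), ← hNsup,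
        Subgroup.smul_sup, mem_normalizer_iff_conj_smul.mp (Subgroup.le_normalizer_of_normal (K := ⊤) (Subgroup.mem_top k₀⁻¹) : k₀⁻¹ ∈ Subgroup.normalizer (N : Set G)), map_inv, inv_smul_smul]
    obtain ⟨k₁, hk₁, hconj₁⟩ := hn ⟨k₀⁻¹ * g, hg₁⟩
    have hk₁G : (↑k₁ : G) ∈ H ⊔ MulAut.conj (k₀⁻¹ * g) • H := by
      have := Subgroup.mem_map_of_mem M.subtype hk₁
      rwa [Subgroup.map_sup, map_conj_smul, hmapH] at this
    have hconj₁G : MulAut.conj (↑k₁ : G) • H = MulAut.conj (k₀⁻¹ * g) • H := by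
      have := congrArg (Subgroup.map M.subtype) hconj₁
      rwa [map_conj_smul, map_conj_smul, hmapH] at this
    have hKle : H ⊔ MulAut.conj (k₀⁻¹ * g) • H ≤ H ⊔ MulAut.conj g • H := by
      refine sup_le le_sup_left ?_
      rw [map_mul, mul_smul]
      calc MulAut.conj k₀⁻¹ • MulAut.conj g • H
          ≤ MulAut.conj k₀⁻¹ • (H ⊔ MulAut.conj g • H) :=
            Subgroup.pointwise_smul_le_pointwise_smul_iff.mpr le_sup_right
        _ = H ⊔ MulAut.conj g • H := conj_smul_self ((H ⊔ MulAut.conj g • H).inv_mem hk₀)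
    refine ⟨k₀ * ↑k₁, Subgroup.mul_mem _ hk₀ (hKle hk₁G), ?_⟩
    rw [map_mul, mul_smul, hconj₁G, ← mul_smul, ← map_mul]
    congr 1
    group
end
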